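/- Let κ be a field, let s ∈ ℝ≥0, and let N be any κ[ℝ₊]-module. Then for every n ≥ 2, the Tor module Tor_n^{κ[ℝ₊]}(κ[ℝ₊] ⧸ Ideal.span {T^s}, N), computed in the category of κ[ℝ₊]-modules, is the zero module. -/

import Mathlib

open CategoryTheory
open scoped NNReal

noncomputable section

open CategoryTheory.Limits MonoidalCategory

/-- The ring `κ[ℝ₊]` of polynomials with coefficients in `κ` and exponents in `ℝ≥0`,
realized as the monoid algebra of the additive monoid `ℝ≥0` over `κ`. -/
abbrev PersRing (κ : Type) [Field κ] : Type := AddMonoidAlgebra κ ℝ≥0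

lemma tor_aux {R : Type} [CommRing R] (f : R)
    (hreg : Function.Injective (fun x : R => f * x))
    (N : ModuleCat R) (n : ℕ) (hn : 2 ≤ n) :
    Limits.IsZero
      (((Tor (ModuleCat R) n).obj (ModuleCat.of R (R ⧸ Ideal.span {f}))).obj N) := by
  classical
  have hφinj : Function.Injective (LinearMap.lsmul R R f) := hreg
  have hexact0 : Function.Exact (LinearMap.lsmul R R f) (Ideal.span {f}).mkQ := by
    rw [LinearMap.exact_iff]
    ext y
    simp only [LinearMap.mem_range, LinearMap.lsmul_apply, smul_eq_mul,
      LinearMap.mem_ker, Submodule.mkQ_apply]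
    rw [Submodule.Quotient.mk_eq_zero, Ideal.mem_span_singleton]
    constructor
    · rintro ⟨c, hc⟩; exact ⟨c, hc.symm⟩
    · rintro ⟨c, hc⟩; exact ⟨c, hc.symm⟩
  have hπsurj : Function.Surjective ((Ideal.span {f}).mkQ) :=
    Submodule.mkQ_surjective _
  let R' : ModuleCat R := ModuleCat.of R R
  let M' : ModuleCat R := ModuleCat.of R (R ⧸ Ideal.span {f})
  let φ : R' ⟶ R' := ModuleCat.ofHom (LinearMap.lsmul R R f)
  let π : R' ⟶ M' := ModuleCat.ofHom (Ideal.span {f}).mkQ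
  have hcomp : φ ≫ π = 0 := by
    refine ModuleCat.hom_ext (LinearMap.ext fun (x : R) => ?_)
    show (Ideal.span {f}).mkQ (f * x) = 0
    rw [Submodule.mkQ_apply, Submodule.Quotient.mk_eq_zero]
    exact Ideal.mul_mem_right x _ (Ideal.mem_span_singleton_self f)
  set P : ProjectiveResolution N := (HasProjectiveResolution.out (Z := N)).some with hP
  set K := P.complex with hK
  have hflatK : ∀ i : ℕ, Module.Flat R (K.X i) := fun i => by
    have : Module.Projective R (K.X i) := (IsProjective.iff_projective (K.X i)).mpr (P.projective i)
    exact Module.Flat.of_projective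
  set S : ShortComplex (HomologicalComplex (ModuleCat R) (ComplexShape.down ℕ)) := ShortComplex.mk
    ((NatTrans.mapHomologicalComplex ((tensoringLeft (ModuleCat R)).map φ) _).app K)
    ((NatTrans.mapHomologicalComplex ((tensoringLeft (ModuleCat R)).map π) _).app K)
    (by
      ext i : 1
      show (φ ▷ K.X i) ≫ (π ▷ K.X i) = 0
      rw [← MonoidalCategory.comp_whiskerRight, hcomp,
        MonoidalPreadditive.zero_whiskerRight]) with hS
  have hSE : S.ShortExact := by
    rw [HomologicalComplex.shortExact_iff_degreewise_shortExact]
    intro i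
    letI := hflatK i
    refine ShortComplex.ShortExact.mk' ?_ ?_ ?_
    · rw [ShortComplex.moduleCat_exact_iff_range_eq_ker]
      have h2 := rTensor_exact (M := R) (N := R) (K.X i) hexact0 hπsurj
      rw [LinearMap.exact_iff] at h2
      exact h2.symm
    · rw [ModuleCat.mono_iff_injective]
      exact Module.Flat.rTensor_preserves_injective_linearMap (LinearMap.lsmul R R f) hφinj
    · rw [ModuleCat.epi_iff_surjective]
      exact LinearMap.rTensor_surjective (K.X i) hπsurj
  have e : (tensoringLeft (ModuleCat R)).obj R' ≅ 𝟭 (ModuleCat R) := leftUnitorNatIso (ModuleCat R)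
  have hXiso : S.X₁ ≅ K :=
    (NatIso.mapHomologicalComplex e (ComplexShape.down ℕ)).app K ≪≫
      (Functor.mapHomologicalComplexIdIso (ModuleCat R) (ComplexShape.down ℕ)).app K
  have hKzero : ∀ m : ℕ, IsZero (K.homology (m + 1)) := fun m =>
    (HomologicalComplex.exactAt_iff_isZero_homology _ _).mp (P.complex_exactAt_succ m)
  have h₁ : ∀ m : ℕ, IsZero (S.X₁.homology (m + 1)) := fun m =>
    (hKzero m).of_iso ((HomologicalComplex.homologyFunctor (ModuleCat R) _ (m + 1)).mapIso hXiso)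
  obtain ⟨m, rfl⟩ : ∃ m, n = m + 2 := ⟨n - 2, by omega⟩
  have hrel : (ComplexShape.down ℕ).Rel (m + 2) (m + 1) := by simp
  have hex := hSE.homology_exact₃ (m + 2) (m + 1) hrel
  have h3 : IsZero
      ((HomologicalComplex.homologyFunctor (ModuleCat R) (ComplexShape.down ℕ) (m + 2)).obj
        ((((tensoringLeft (ModuleCat R)).obj M').mapHomologicalComplex (ComplexShape.down ℕ)).obj
          P.complex)) := by
    refine hex.isZero_X₂ ?_ ?_
    · exact (h₁ (m + 1)).eq_of_src _ _
    · exact (h₁ m).eq_of_tgt _ _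
  show IsZero ((((tensoringLeft (ModuleCat R)).obj M').leftDerived (m + 2)).obj N)
  exact h3.of_iso (P.isoLeftDerivedObj ((tensoringLeft (ModuleCat R)).obj M') (m + 2))

/-- **Vanishing of higher Tor (Proposition 2.8, final statement).**  For every `s ∈ ℝ≥0`,
every `κ[ℝ₊]`-module `N`, and every `n ≥ 2`, the Tor module
`Tor_n(κ[ℝ₊] ⧸ (T^s), N)`, computed in the category of `κ[ℝ₊]`-modules, is zero. -/
theorem tor_bar_eq_zero_of_two_le (κ : Type) [Field κ] (s : ℝ≥0)
    (N : ModuleCat (PersRing κ)) (n : ℕ) (hn : 2 ≤ n) :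
    Limits.IsZero
      (((Tor (ModuleCat (PersRing κ)) n).obj
        (ModuleCat.of (PersRing κ)
          (PersRing κ ⧸ Ideal.span {AddMonoidAlgebra.single s (1 : κ)}))).obj N) := by
  have hf0 : (AddMonoidAlgebra.single s (1 : κ) : PersRing κ) ≠ 0 := by
    intro h
    exact one_ne_zero (AddMonoidAlgebra.single_eq_zero.mp h)
  exact tor_aux _ (fun a b hab => mul_left_cancel₀ hf0 hab) N n hn

end
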